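/- Let g ∈ L^1(a,b). For every ε > 0 there exists x_ε ∈ ℝ such that, setting G_ε = {x_α = x_ε + 2εα : α ∈ ℤ and x_α ∈ (a+ε, b−ε)}, there is a subset G′_ε ⊂ G_ε with ∫_{∪{I_ε(x_α) : x_α ∈ G′_ε}} |g| dt + 2·#(G_ε ∖ G′_ε) ≤ (1/(c_0 ε)) ∫_a^b f(ε ⨍_{I_ε(x)∩(a,b)} |g| dt) dx. -/

import Mathlib

open MeasureTheory Filter Set Topology
open scoped ENNReal NNReal

noncomputable section

/-- Integral of a real function against a finite signed (Radon) measure. -/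
def sInt (μ : MeasureTheory.SignedMeasure ℝ) (φ : ℝ → ℝ) : ℝ :=
  (∫ x, φ x ∂μ.toJordanDecomposition.posPart) -
    ∫ x, φ x ∂μ.toJordanDecomposition.negPart

/-- The cohesive energy density `f(t) = c₀ t` for `t < 1` and `f(t) = c₀` for `t ≥ 1`. -/
def fcut (c₀ t : ℝ) : ℝ := if t < 1 then c₀ * t else c₀

/-- The flat norm of a signed measure relative to the open set `A`:
the supremum of integrals against `W^{1,∞}_0(A)` test functions of norm at most one. -/
def flatNormOn (A : Set ℝ) (μ : SignedMeasure ℝ) : ℝ :=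
  sSup { r | ∃ φ : ℝ → ℝ, LipschitzWith 1 φ ∧ (∀ x, |φ x| ≤ 1) ∧
    (∀ x ∉ A, φ x = 0) ∧ r = sInt μ φ }

/-- The flat norm on the interval `(a,b)`. -/
def flatNorm (a b : ℝ) (μ : SignedMeasure ℝ) : ℝ := flatNormOn (Set.Ioo a b) μ

/-- The `W^{-1,q}` norm on the open set `A`, where `p = q'` is the conjugate exponent:
the supremum of integrals against (smooth) `W^{1,p}_0(A)` test functions of norm ≤ 1. -/
def negSobNormOn (A : Set ℝ) (p : ℝ≥0∞) (μ : SignedMeasure ℝ) : ℝ :=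
  sSup { r | ∃ φ : ℝ → ℝ, ContDiff ℝ 1 φ ∧ (∀ x ∉ A, φ x = 0) ∧
    eLpNorm φ p (volume.restrict A) + eLpNorm (deriv φ) p (volume.restrict A) ≤ 1 ∧
    r = sInt μ φ }

/-- `u ∈ W^{1,1}(a,b)` with (weak) derivative `u'`: `u` is absolutely continuous on
`(a,b)` with integrable derivative `u'`. -/
def IsW11 (a b : ℝ) (u u' : ℝ → ℝ) : Prop :=
  IntegrableOn u (Set.Ioo a b) ∧ IntegrableOn u' (Set.Ioo a b) ∧
    ∀ x ∈ Set.Ioo a b, ∀ y ∈ Set.Ioo a b, x ≤ y → u y - u x = ∫ t in x..y, u' t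

/-- `‖u‖_{L^∞(a,b)} ≤ K`. -/
def LinftyLE (a b K : ℝ) (u : ℝ → ℝ) : Prop :=
  ∀ᵐ x ∂(volume.restrict (Set.Ioo a b)), |u x| ≤ K

/-- `Du` is the distributional derivative (a finite signed measure concentrated on `A`)
of `u` on the open set `A`; this encodes `u ∈ BV(A)` with derivative measure `Du`. -/
def HasDerivMeasureOn (A : Set ℝ) (u : ℝ → ℝ) (Du : SignedMeasure ℝ) : Prop :=
  Du = Du.restrict A ∧
    ∀ φ : ℝ → ℝ, ContDiff ℝ 1 φ → HasCompactSupport φ → tsupport φ ⊆ A →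
      ∫ x in A, u x * deriv φ x = - sInt Du φ

/-- Right limit `u(x+)`. -/
def rlim (u : ℝ → ℝ) (x : ℝ) : ℝ := limUnder (𝓝[>] x) u
/-- Left limit `u(x−)`. -/
def llim (u : ℝ → ℝ) (x : ℝ) : ℝ := limUnder (𝓝[<] x) u

/-- The jump set `J_u` of `u` in `(a,b)`. -/
def jumpSet (a b : ℝ) (u : ℝ → ℝ) : Set ℝ :=
  {x | x ∈ Set.Ioo a b ∧ (∃ l, Tendsto u (𝓝[<] x) (𝓝 l)) ∧
    (∃ r, Tendsto u (𝓝[>] x) (𝓝 r)) ∧ rlim u x ≠ llim u x}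

/-- The jump `[u](x) = u(x+) − u(x−)`. -/
def jump (u : ℝ → ℝ) (x : ℝ) : ℝ := rlim u x - llim u x

/-- The Cantor part `D^c u` of the derivative measure `Du`. -/
def cantorPart (a b : ℝ) (u : ℝ → ℝ) (Du : SignedMeasure ℝ) : SignedMeasure ℝ :=
  (Du.singularPart volume).restrict (jumpSet a b u)ᶜ

/-- The average `⨍_{I_ε(x) ∩ (a,b)} |g| dt`. -/
def avgAbs (a b ε : ℝ) (g : ℝ → ℝ) (x : ℝ) : ℝ :=
  ⨍ t in Set.Ioo (x - ε) (x + ε) ∩ Set.Ioo a b, |g t|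

/-- The value of the approximating energies, localized to the set `A`. -/
def EpsCoreOn (a b c₀ ε : ℝ) (A : Set ℝ) (u' g : ℝ → ℝ) : ℝ :=
  (∫ x in A, (u' x - g x) ^ 2) + (1 / ε) * ∫ x in A, fcut c₀ (ε * avgAbs a b ε g x)

/-- The approximating (localized) energy `E_ε(u,γ,A)` for `K < ∞`: it is `∞` unless
`u ∈ W^{1,1}(a,b)`, `‖u‖_∞ ≤ K`, `γ = g·L¹` with `g ∈ L¹(a,b)` and `u' - g ∈ L²(a,b)`.
(The infimum runs over all the possible representations; they all yield the same value.) -/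
def EepsLoc (a b c₀ K ε : ℝ) (A : Set ℝ) (u : ℝ → ℝ) (γ : SignedMeasure ℝ) : ℝ≥0∞ :=
  ⨅ (u' : ℝ → ℝ) (g : ℝ → ℝ) (_ : IsW11 a b u u') (_ : LinftyLE a b K u)
    (_ : IntegrableOn g (Set.Ioo a b))
    (_ : γ = (volume.restrict (Set.Ioo a b)).withDensityᵥ g)
    (_ : MemLp (fun x => u' x - g x) 2 (volume.restrict (Set.Ioo a b))),
    ENNReal.ofReal (EpsCoreOn a b c₀ ε A u' g)

/-- The approximating energy `E_ε(u,γ)` for `K < ∞`. -/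
def Eeps (a b c₀ K ε : ℝ) (u : ℝ → ℝ) (γ : SignedMeasure ℝ) : ℝ≥0∞ :=
  EepsLoc a b c₀ K ε (Set.Ioo a b) u γ

/-- The value of the limiting energy `E` for `u ∈ BV(a,b)` with derivative measure `Du`
and inelastic density `g`:
`∫ |u'-g|² + c₀ ∫ |g| + 2 Σ_{x ∈ J_u} f(|[u](x)|/2) + c₀ |D^c u|(a,b)`. -/
def ElimVal (a b c₀ : ℝ) (u : ℝ → ℝ) (Du : SignedMeasure ℝ) (g : ℝ → ℝ) : ℝ≥0∞ :=
  ENNReal.ofReal (∫ x in Set.Ioo a b, (Du.rnDeriv volume x - g x) ^ 2)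
    + ENNReal.ofReal (c₀ * ∫ x in Set.Ioo a b, |g x|)
    + 2 * ∑' p : (jumpSet a b u), ENNReal.ofReal (fcut c₀ (|jump u ↑p| / 2))
    + ENNReal.ofReal c₀ *
        MeasureTheory.SignedMeasure.totalVariation (cantorPart a b u Du) (Set.Ioo a b)

/-- The limiting energy `E(u,γ)` for `K < ∞`: it is `∞` unless `u ∈ BV(a,b)`,
`‖u‖_∞ ≤ K`, `γ = D^s u + g·L¹` with `g ∈ L¹(a,b)` and `u' - g ∈ L²(a,b)`. -/
def Elim (a b c₀ K : ℝ) (u : ℝ → ℝ) (γ : SignedMeasure ℝ) : ℝ≥0∞ :=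
  ⨅ (Du : SignedMeasure ℝ) (g : ℝ → ℝ)
    (_ : IntegrableOn u (Set.Ioo a b)) (_ : HasDerivMeasureOn (Set.Ioo a b) u Du)
    (_ : LinftyLE a b K u) (_ : IntegrableOn g (Set.Ioo a b))
    (_ : γ = Du.singularPart volume + (volume.restrict (Set.Ioo a b)).withDensityᵥ g)
    (_ : MemLp (fun x => Du.rnDeriv volume x - g x) 2 (volume.restrict (Set.Ioo a b))),
    ElimVal a b c₀ u Du g

/-- Convergence `u_ε → u` in `L¹(a,b)` as `ε → 0⁺`. -/
def TendstoL1 (a b : ℝ) (uε : ℝ → ℝ → ℝ) (u : ℝ → ℝ) : Prop :=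
  Tendsto (fun ε => ∫ x in Set.Ioo a b, |uε ε x - u x|) (𝓝[>] (0:ℝ)) (𝓝 0)

/-- Convergence `γ_ε → γ` in the flat norm as `ε → 0⁺`. -/
def TendstoFlat (a b : ℝ) (γε : ℝ → SignedMeasure ℝ) (γ : SignedMeasure ℝ) : Prop :=
  Tendsto (fun ε => flatNorm a b (γε ε - γ)) (𝓝[>] (0:ℝ)) (𝓝 0)

/-- The localized Γ-lower limit `E'(u,γ,A)`. -/
def GammaLowerLoc (a b c₀ K : ℝ) (A : Set ℝ) (u : ℝ → ℝ) (γ : SignedMeasure ℝ) : ℝ≥0∞ :=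
  ⨅ (uε : ℝ → ℝ → ℝ) (γε : ℝ → SignedMeasure ℝ)
    (_ : TendstoL1 a b uε u) (_ : TendstoFlat a b γε γ),
    liminf (fun ε => EepsLoc a b c₀ K ε A (uε ε) (γε ε)) (𝓝[>] (0:ℝ))

/-- The Γ-upper limit `E''(u,γ)`. -/
def GammaUpper (a b c₀ K : ℝ) (u : ℝ → ℝ) (γ : SignedMeasure ℝ) : ℝ≥0∞ :=
  ⨅ (uε : ℝ → ℝ → ℝ) (γε : ℝ → SignedMeasure ℝ)
    (_ : TendstoL1 a b uε u) (_ : TendstoFlat a b γε γ),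
    limsup (fun ε => Eeps a b c₀ K ε (uε ε) (γε ε)) (𝓝[>] (0:ℝ))

/-! ### The unrestricted case `K = ∞` (extended-real valued displacements) -/

/-- The finiteness set `F(u)` of `u : (a,b) → ℝ̄`. -/
def finSet (a b : ℝ) (u : ℝ → EReal) : Set ℝ :=
  interior {x | x ∈ Set.Ioo a b ∧ u x ≠ ⊤ ∧ u x ≠ ⊥}

/-- Right limit `u(x+)` in `ℝ̄`. -/
def erlim (u : ℝ → EReal) (x : ℝ) : EReal := limUnder (𝓝[>] x) u
/-- Left limit `u(x−)` in `ℝ̄`. -/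
def ellim (u : ℝ → EReal) (x : ℝ) : EReal := limUnder (𝓝[<] x) u

/-- The jump set of `u : (a,b) → ℝ̄`. -/
def jumpSetE (a b : ℝ) (u : ℝ → EReal) : Set ℝ :=
  {x | x ∈ Set.Ioo a b ∧ (∃ l, Tendsto u (𝓝[<] x) (𝓝 l)) ∧
    (∃ r, Tendsto u (𝓝[>] x) (𝓝 r)) ∧ erlim u x ≠ ellim u x}

/-- `f(|r − l|/2)` for one-sided limits `l, r ∈ ℝ̄`, with the convention `f(∞) = c₀`. -/
def fjumpE (c₀ : ℝ) (l r : EReal) : ℝ :=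
  if l = ⊤ ∨ l = ⊥ ∨ r = ⊤ ∨ r = ⊥ then c₀ else fcut c₀ (|r.toReal - l.toReal| / 2)

/-- `u ∈ BV_{∞,P}(a,b)` with representation data `u = w + Σᵢ αᵢ χ_{(x_{i-1}, x_i)}`. -/
def IsBVinftyRep (a b : ℝ) (u : ℝ → EReal) (m : ℕ) (x : Fin (m + 1) → ℝ)
    (α : Fin m → EReal) (w : ℝ → ℝ) : Prop :=
  StrictMono x ∧ x 0 = a ∧ x (Fin.last m) = b ∧
    (∀ i, α i = ⊥ ∨ α i = 0 ∨ α i = ⊤) ∧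
    IntegrableOn w (Set.Ioo a b) ∧ (∃ Dw, HasDerivMeasureOn (Set.Ioo a b) w Dw) ∧
    ∀ t ∈ Set.Ioo a b,
      u t = (w t : EReal) +
        ∑ i : Fin m, (if t ∈ Set.Ioo (x i.castSucc) (x i.succ) then α i else 0)

/-- The value of the extended limiting energy for `u ∈ BV_{∞,P}(a,b)` with `BV` part `w`
(whose derivative measure is `Dw`) and inelastic density `g`. -/
def ElimInfVal (a b c₀ : ℝ) (u : ℝ → EReal) (Dw : SignedMeasure ℝ) (g : ℝ → ℝ) : ℝ≥0∞ :=
  ENNReal.ofReal (∫ t in finSet a b u, (Dw.rnDeriv volume t - g t) ^ 2)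
    + ENNReal.ofReal (c₀ * ∫ t in finSet a b u, |g t|)
    + 2 * ∑' p : (jumpSetE a b u), ENNReal.ofReal (fjumpE c₀ (ellim u ↑p) (erlim u ↑p))
    + ENNReal.ofReal c₀ *
        MeasureTheory.SignedMeasure.totalVariation
          ((Dw.singularPart volume).restrict (jumpSetE a b u)ᶜ) (finSet a b u)

/-- The extended limiting energy `E(u,γ)` for `K = ∞`: it is `∞` unless
`u ∈ BV_{∞,P}(a,b)`, `g ∈ L¹(F(u))`, `γ⌊F(u) = (D^s u + g·L¹)⌊F(u)` and
`u' − g ∈ L²(F(u))`. -/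
def ElimInf (a b c₀ : ℝ) (u : ℝ → EReal) (γ : SignedMeasure ℝ) : ℝ≥0∞ :=
  ⨅ (m : ℕ) (x : Fin (m + 1) → ℝ) (α : Fin m → EReal) (w : ℝ → ℝ)
    (Dw : SignedMeasure ℝ) (g : ℝ → ℝ)
    (_ : IsBVinftyRep a b u m x α w)
    (_ : HasDerivMeasureOn (Set.Ioo a b) w Dw)
    (_ : IntegrableOn g (finSet a b u))
    (_ : γ.restrict (finSet a b u) =
      (Dw.singularPart volume + (volume.restrict (finSet a b u)).withDensityᵥ g).restrict
        (finSet a b u))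
    (_ : MemLp (fun t => Dw.rnDeriv volume t - g t) 2 (volume.restrict (finSet a b u))),
    ElimInfVal a b c₀ u Dw g

/-- The approximating energy `E_ε(u,γ)` for `K = ∞`, acting on `u : (a,b) → ℝ̄`. -/
def EepsInf (a b c₀ ε : ℝ) (u : ℝ → EReal) (γ : SignedMeasure ℝ) : ℝ≥0∞ :=
  ⨅ (v : ℝ → ℝ) (u' : ℝ → ℝ) (g : ℝ → ℝ) (_ : ∀ t ∈ Set.Ioo a b, u t = (v t : EReal))
    (_ : IsW11 a b v u') (_ : IntegrableOn g (Set.Ioo a b))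
    (_ : γ = (volume.restrict (Set.Ioo a b)).withDensityᵥ g)
    (_ : MemLp (fun t => u' t - g t) 2 (volume.restrict (Set.Ioo a b))),
    ENNReal.ofReal (EpsCoreOn a b c₀ ε (Set.Ioo a b) u' g)

/-- Convergence `(u_ε, γ_ε) → (u, γ)` in `L⁰((a,b), ℝ̄) × M(a,b)`:
`u_ε → u` a.e. and `γ_ε⌊A → γ⌊A` in the flat norm for every open `A ⋐ F(u) ∖ S`,
for some finite set `S ⊆ (a,b)` of partition points. -/
def TendstoL0 (a b : ℝ) (uε : ℝ → ℝ → EReal) (γε : ℝ → SignedMeasure ℝ)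
    (u : ℝ → EReal) (γ : SignedMeasure ℝ) : Prop :=
  (∀ᵐ t ∂(volume.restrict (Set.Ioo a b)),
      Tendsto (fun ε => uε ε t) (𝓝[>] (0:ℝ)) (𝓝 (u t))) ∧
    ∃ S : Finset ℝ, ↑S ⊆ Set.Ioo a b ∧
      ∀ A : Set ℝ, IsOpen A → IsCompact (closure A) → closure A ⊆ finSet a b u \ ↑S →
        Tendsto (fun ε => flatNormOn A (((γε ε) - γ).restrict A)) (𝓝[>] (0:ℝ)) (𝓝 0)

/-- The minimal approximating energy `Ẽ_ε(u)` (for `K < ∞`). -/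
def EepsMin (a b c₀ K ε : ℝ) (u : ℝ → ℝ) : ℝ≥0∞ :=
  ⨅ γ : SignedMeasure ℝ, Eeps a b c₀ K ε u γ

/-- The minimal limiting energy `Ẽ(u)` (for `K < ∞`). -/
def ElimMin (a b c₀ K : ℝ) (u : ℝ → ℝ) : ℝ≥0∞ :=
  ⨅ γ : SignedMeasure ℝ, Elim a b c₀ K u γ

/-- The minimal approximating energy `Ẽ_ε(u)` for `K = ∞`. -/
def EepsInfMin (a b c₀ ε : ℝ) (u : ℝ → EReal) : ℝ≥0∞ :=
  ⨅ γ : SignedMeasure ℝ, EepsInf a b c₀ ε u γ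

/-- The minimal limiting energy `Ẽ(u)` for `K = ∞`. -/
def ElimInfMin (a b c₀ : ℝ) (u : ℝ → EReal) : ℝ≥0∞ :=
  ⨅ γ : SignedMeasure ℝ, ElimInf a b c₀ u γ

/-- The soft-thresholding function `g*` associated with `h` and `c₀`. -/
def softThresh (c₀ : ℝ) (h : ℝ → ℝ) : ℝ → ℝ := fun x =>
  if c₀ / 2 < |h x| then h x - Real.sign (h x) * (c₀ / 2) else 0

open Classical in
/-- The functional `g ↦ ∫ |h−g|² + c₀ ∫ |g|` on `(a,b)`, with value `∞` if `h − g ∉ L²`. -/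
def softJ (a b c₀ : ℝ) (h g : ℝ → ℝ) : ℝ≥0∞ :=
  if MemLp (fun x => h x - g x) 2 (volume.restrict (Set.Ioo a b)) then
    ENNReal.ofReal (∫ x in Set.Ioo a b, (h x - g x) ^ 2)
      + ENNReal.ofReal (c₀ * ∫ x in Set.Ioo a b, |g x|)
  else ⊤



/-! ### Auxiliary lemmas for the grid selection lemma -/

lemma fcut_eq_mul_min (c₀ t : ℝ) : fcut c₀ t = c₀ * min t 1 := by
  unfold fcut
  split_ifs with h
  · rw [min_eq_left h.le]
  · rw [min_eq_right (le_of_not_gt h), mul_one]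

lemma avgAbs_eq (a b ε : ℝ) (g : ℝ → ℝ) (x : ℝ) :
    avgAbs a b ε g x =
      (volume (Set.Ioo (x - ε) (x + ε) ∩ Set.Ioo a b)).toReal⁻¹ *
        ∫ t in Set.Ioo (x - ε) (x + ε) ∩ Set.Ioo a b, |g t| := by
  rw [avgAbs, setAverage_eq, smul_eq_mul, measureReal_def]

lemma avgAbs_nonneg (a b ε : ℝ) (g : ℝ → ℝ) (x : ℝ) : 0 ≤ avgAbs a b ε g x := by
  rw [avgAbs_eq]
  exact mul_nonneg (inv_nonneg.2 ENNReal.toReal_nonneg)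
    (setIntegral_nonneg (measurableSet_Ioo.inter measurableSet_Ioo) fun t _ => abs_nonneg _)

lemma integral_abs_inter_eq (a b : ℝ) (g : ℝ → ℝ) (x ε : ℝ) (hε : 0 < ε) :
    (∫ t in Set.Ioo (x - ε) (x + ε) ∩ Set.Ioo a b, |g t|) =
      ∫ t in (x - ε)..(x + ε), (Set.Ioo a b).indicator (fun t => |g t|) t := by
  rw [intervalIntegral.integral_of_le (by linarith), integral_Ioc_eq_integral_Ioo,
    setIntegral_indicator measurableSet_Ioo]

lemma measurable_avgAbs (a b : ℝ) (g : ℝ → ℝ) (hg : IntegrableOn g (Set.Ioo a b))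
    (ε : ℝ) (hε : 0 < ε) : Measurable (avgAbs a b ε g) := by
  have hGint : Integrable ((Set.Ioo a b).indicator (fun t => |g t|)) := by
    rw [integrable_indicator_iff measurableSet_Ioo]
    exact hg.abs
  have hprim : Continuous fun y => ∫ t in (0:ℝ)..y,
      (Set.Ioo a b).indicator (fun t => |g t|) t :=
    hGint.continuous_primitive 0
  have hI : Continuous fun x => ∫ t in Set.Ioo (x - ε) (x + ε) ∩ Set.Ioo a b, |g t| := by
    have : ∀ x : ℝ, (∫ t in Set.Ioo (x - ε) (x + ε) ∩ Set.Ioo a b, |g t|) =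
        (∫ t in (0:ℝ)..(x + ε), (Set.Ioo a b).indicator (fun t => |g t|) t) -
          ∫ t in (0:ℝ)..(x - ε), (Set.Ioo a b).indicator (fun t => |g t|) t := by
      intro x
      rw [integral_abs_inter_eq a b g x ε hε,
        ← intervalIntegral.integral_interval_sub_left
          hGint.intervalIntegrable hGint.intervalIntegrable]
    simp only [this]
    exact (hprim.comp (continuous_id.add continuous_const)).sub
      (hprim.comp (continuous_id.sub continuous_const))
  have hV : Measurable fun x =>
      (volume (Set.Ioo (x - ε) (x + ε) ∩ Set.Ioo a b)).toReal⁻¹ := by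
    have : ∀ x : ℝ, (volume (Set.Ioo (x - ε) (x + ε) ∩ Set.Ioo a b)).toReal =
        max (min (x + ε) b - max (x - ε) a) 0 := by
      intro x
      rw [Set.Ioo_inter_Ioo, Real.volume_Ioo, ENNReal.toReal_ofReal']
    simp only [this]
    exact (((continuous_id.add continuous_const).min continuous_const).sub
      ((continuous_id.sub continuous_const).max continuous_const)).max
      continuous_const |>.measurable.inv
  have : avgAbs a b ε g = fun x =>
      (volume (Set.Ioo (x - ε) (x + ε) ∩ Set.Ioo a b)).toReal⁻¹ *
        ∫ t in Set.Ioo (x - ε) (x + ε) ∩ Set.Ioo a b, |g t| := by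
    funext x; exact avgAbs_eq a b ε g x
  rw [this]
  exact hV.mul hI.measurable

lemma avgAbs_interior (a b : ℝ) (g : ℝ → ℝ) (ε : ℝ) (hε : 0 < ε)
    (y : ℝ) (hy : y ∈ Set.Ioo (a + ε) (b - ε)) :
    ε * avgAbs a b ε g y = (∫ t in Set.Ioo (y - ε) (y + ε), |g t|) / 2 := by
  obtain ⟨hy1, hy2⟩ := hy
  have hsub : Set.Ioo (y - ε) (y + ε) ⊆ Set.Ioo a b :=
    Set.Ioo_subset_Ioo (by linarith) (by linarith)
  rw [avgAbs_eq, Set.inter_eq_left.2 hsub, Real.volume_Ioo,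
    ENNReal.toReal_ofReal (by linarith)]
  have h2ε : y + ε - (y - ε) = 2 * ε := by ring
  rw [h2ε]
  field_simp

/-- **Lemma (grid selection).**
For `g ∈ L¹(a,b)` and `ε > 0` there is `x_ε ∈ ℝ` such that the grid
`G_ε = {x_ε + 2εα : α ∈ ℤ} ∩ (a+ε, b−ε)` contains a subset `G'_ε ⊆ G_ε` with
`∫_{∪{I_ε(x) : x ∈ G'_ε}} |g| + 2 #(G_ε ∖ G'_ε) ≤ (1/(c₀ε)) ∫_a^b f(ε ⨍_{I_ε(x)∩(a,b)} |g|) dx`. -/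
theorem eigendamage_grid_lemma
    (a b c₀ : ℝ) (ha : 0 < a) (hab : a < b) (hc₀ : 0 < c₀)
    (g : ℝ → ℝ) (hg : IntegrableOn g (Set.Ioo a b)) (ε : ℝ) (hε : 0 < ε) :
    ∃ xε : ℝ, ∃ Gε' : Set ℝ,
      Gε' ⊆ {y : ℝ | (∃ α : ℤ, y = xε + 2 * ε * α) ∧ y ∈ Set.Ioo (a + ε) (b - ε)} ∧
      ({y : ℝ | (∃ α : ℤ, y = xε + 2 * ε * α) ∧ y ∈ Set.Ioo (a + ε) (b - ε)} \ Gε').Finite ∧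
      (∫ t in ⋃ x ∈ Gε', Set.Ioo (x - ε) (x + ε), |g t|) +
          2 * (({y : ℝ | (∃ α : ℤ, y = xε + 2 * ε * α) ∧
                  y ∈ Set.Ioo (a + ε) (b - ε)} \ Gε').ncard : ℝ) ≤
        (1 / (c₀ * ε)) * ∫ x in Set.Ioo a b, fcut c₀ (ε * avgAbs a b ε g x) := by
  classical
  have hε2 : (0:ℝ) < 2 * ε := by linarith
  set h : ℝ → ℝ := fun x => min (ε * avgAbs a b ε g x) 1 with hdef
  have h_nonneg : ∀ x, 0 ≤ h x := fun x =>
    le_min (mul_nonneg hε.le (avgAbs_nonneg a b ε g x)) zero_le_one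
  have h_le_one : ∀ x, h x ≤ 1 := fun x => min_le_right _ _
  have h_meas : Measurable h :=
    (measurable_const.mul (measurable_avgAbs a b g hg ε hε)).min measurable_const
  have h_bd : ∀ x, |h x| ≤ 1 := fun x => by
    rw [abs_of_nonneg (h_nonneg x)]; exact h_le_one x
  have bdd_int : ∀ (f : ℝ → ℝ), Measurable f → (∀ x, |f x| ≤ (1:ℝ)) →
      ∀ s : Set ℝ, volume s ≠ ∞ → IntegrableOn f s := by
    intro f hf hbd s hs
    exact Measure.integrableOn_of_bounded hs hf.aestronglyMeasurable
      (ae_of_all _ (by simpa [Real.norm_eq_abs] using hbd))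
  set H : ℝ → ℝ := (Set.Ioo (a + ε) (b - ε)).indicator h with Hdef
  have H_meas : Measurable H := h_meas.indicator measurableSet_Ioo
  have H_nonneg : ∀ x, 0 ≤ H x := fun x =>
    Set.indicator_nonneg (fun y _ => h_nonneg y) x
  have H_bd : ∀ x, |H x| ≤ 1 := fun x => by
    rw [Hdef, Set.indicator]
    split_ifs
    · exact h_bd x
    · simp
  have H_int : Integrable H := by
    rw [Hdef, integrable_indicator_iff measurableSet_Ioo]
    exact bdd_int _ h_meas h_bd _ (by rw [Real.volume_Ioo]; exact ENNReal.ofReal_ne_top)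
  -- the grid index bounds
  set m : ℤ := ⌊(a + ε) / (2 * ε)⌋ with mdef
  set M : ℤ := max ⌈(b - ε) / (2 * ε)⌉ m with Mdef
  have hmM : m ≤ M := le_max_right _ _
  have hm_le : 2 * ε * (m:ℝ) ≤ a + ε := by
    have h1 : (m:ℝ) ≤ (a + ε) / (2 * ε) := Int.floor_le _
    have := mul_le_mul_of_nonneg_left h1 hε2.le
    calc 2 * ε * (m:ℝ) ≤ 2 * ε * ((a + ε) / (2 * ε)) := this
    _ = a + ε := by field_simp
  have hM_ge : b - ε ≤ 2 * ε * ((M:ℝ) + 1) := by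
    have h1 : (b - ε) / (2 * ε) ≤ (⌈(b - ε) / (2 * ε)⌉ : ℝ) := Int.le_ceil _
    have h2 : ((⌈(b - ε) / (2 * ε)⌉ : ℤ) : ℝ) ≤ (M:ℝ) := by
      exact_mod_cast (le_max_left _ m : ⌈(b - ε) / (2 * ε)⌉ ≤ M)
    have h3 : (b - ε) / (2 * ε) ≤ (M:ℝ) + 1 := by linarith
    have := mul_le_mul_of_nonneg_left h3 hε2.le
    calc b - ε = 2 * ε * ((b - ε) / (2 * ε)) := by field_simp
    _ ≤ 2 * ε * ((M:ℝ) + 1) := this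
  set n : ℕ := (M + 1 - m).toNat with ndef
  have hn : (n:ℤ) = M + 1 - m := Int.toNat_of_nonneg (by omega)
  have hnR : (n:ℝ) = (M:ℝ) + 1 - (m:ℝ) := by exact_mod_cast hn
  -- the shifted sum
  set F : ℝ → ℝ := fun s => ∑ i ∈ Finset.range n, H (s + 2 * ε * ((m:ℝ) + i)) with Fdef
  set p : ℕ → ℝ := fun i => 2 * ε * ((m:ℝ) + i) with pdef
  have hFint : ∫ s in (0:ℝ)..(2*ε), F s = ∫ t in Set.Ioo (a+ε) (b-ε), h t := by
    have htrans : ∀ c : ℝ, IntervalIntegrable (fun s : ℝ => H (s + c)) volume 0 (2*ε) := by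
      intro c
      refine intervalIntegrable_iff.2 (bdd_int _ ?_ (fun x => H_bd _) _ ?_)
      · exact H_meas.comp (measurable_id.add_const c)
      · rw [Set.uIoc, Real.volume_Ioc]; exact ENNReal.ofReal_ne_top
    simp only [Fdef]
    rw [intervalIntegral.integral_finset_sum
      (f := fun (i : ℕ) (s : ℝ) => H (s + 2 * ε * ((m:ℝ) + (i:ℝ))))
      (fun i _ => htrans (2 * ε * ((m:ℝ) + (i:ℝ))))]
    have hterm : ∀ i ∈ Finset.range n,
        (∫ s in (0:ℝ)..(2*ε), H (s + 2 * ε * ((m:ℝ) + i)))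
          = ∫ t in (p i)..(p (i+1)), H t := by
      intro i _
      rw [intervalIntegral.integral_comp_add_right]
      have e1 : (0:ℝ) + 2 * ε * ((m:ℝ) + i) = p i := by simp only [pdef]; ring
      have e2 : 2*ε + 2 * ε * ((m:ℝ) + i) = p (i+1) := by simp only [pdef]; push_cast; ring
      rw [e1, e2]
    rw [Finset.sum_congr rfl hterm]
    rw [intervalIntegral.sum_integral_adjacent_intervals
      (fun k _ => H_int.intervalIntegrable)]
    have hp0 : p 0 = 2 * ε * (m:ℝ) := by simp only [pdef]; push_cast; ring
    have hpn : p n = 2 * ε * ((M:ℝ) + 1) := by simp only [pdef, hnR]; ring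
    have hmMR : (m:ℝ) ≤ (M:ℝ) := by exact_mod_cast hmM
    have hle : p 0 ≤ p n := by rw [hp0, hpn]; nlinarith
    have hsub : Set.Ioo (a+ε) (b-ε) ⊆ Set.Ioc (p 0) (p n) := by
      intro t ht
      obtain ⟨ht1, ht2⟩ := ht
      constructor
      · rw [hp0]; linarith
      · rw [hpn]; linarith
    rw [intervalIntegral.integral_of_le hle, Hdef, setIntegral_indicator measurableSet_Ioo,
      Set.inter_eq_right.2 hsub]
  set J : ℝ := ∫ t in Set.Ioo (a+ε) (b-ε), h t with Jdef
  have hF_bd : ∀ s, |F s| ≤ (n:ℝ) := by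
    intro s
    calc |F s| ≤ ∑ i ∈ Finset.range n, |H (s + 2 * ε * ((m:ℝ) + i))| :=
          Finset.abs_sum_le_sum_abs _ _
    _ ≤ ∑ _i ∈ Finset.range n, (1:ℝ) := Finset.sum_le_sum (fun i _ => H_bd _)
    _ = (n:ℝ) := by simp
  have hF_meas : Measurable F := by
    apply Finset.measurable_sum
    intro i _
    exact H_meas.comp (measurable_id.add_const _)
  have hF_intOn : IntegrableOn F (Set.Ioc 0 (2*ε)) := by
    apply Measure.integrableOn_of_bounded (M := (n:ℝ))
    · rw [Real.volume_Ioc]; exact ENNReal.ofReal_ne_top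
    · exact hF_meas.aestronglyMeasurable
    · exact ae_of_all _ (by simpa [Real.norm_eq_abs] using hF_bd)
  -- select a good shift
  have hexists : ∃ s ∈ Set.Ioc (0:ℝ) (2*ε), F s ≤ J / (2*ε) := by
    by_contra hcon
    push_neg at hcon
    have hconst : IntegrableOn (fun _ : ℝ => J / (2*ε)) (Set.Ioc 0 (2*ε)) := by
      refine integrableOn_const ?_ ?_
      · rw [Real.volume_Ioc]
        exact ENNReal.ofReal_ne_top
      · exact enorm_ne_top
    have hint0 : ∫ s in Set.Ioc (0:ℝ) (2*ε), (F s - J / (2*ε)) = 0 := by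
      rw [integral_sub hF_intOn hconst, setIntegral_const, smul_eq_mul,
        Real.volume_real_Ioc_of_le (by linarith)]
      have : ∫ s in Set.Ioc (0:ℝ) (2*ε), F s = ∫ s in (0:ℝ)..(2*ε), F s :=
        (intervalIntegral.integral_of_le hε2.le).symm
      rw [this, hFint]
      field_simp
      ring
    have h0 := (setIntegral_eq_zero_iff_of_nonneg_ae
      ((ae_restrict_iff' measurableSet_Ioc).2 (ae_of_all _
        (fun s hs => sub_nonneg.2 (hcon s hs).le)))
      (hF_intOn.sub hconst)).1 hint0
    have hne : (volume.restrict (Set.Ioc (0:ℝ) (2*ε))) ≠ 0 := by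
      rw [Ne, Measure.restrict_eq_zero, Real.volume_Ioc]
      simp only [ENNReal.ofReal_eq_zero, not_le]
      linarith
    have : ∀ᵐ s ∂(volume.restrict (Set.Ioc (0:ℝ) (2*ε))),
        F s - J / (2*ε) = 0 ∧ s ∈ Set.Ioc (0:ℝ) (2*ε) :=
      h0.and (ae_restrict_mem measurableSet_Ioc)
    haveI hnb : (ae (volume.restrict (Set.Ioc (0:ℝ) (2*ε)))).NeBot := ae_neBot.2 hne
    obtain ⟨s, hs0, hsmem⟩ := this.exists
    have := hcon s hsmem
    linarith
  obtain ⟨s, hsmem, hsle⟩ := hexists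
  obtain ⟨hs0, hs2⟩ := hsmem
  -- the grid
  set em : ℕ → ℝ := fun i => s + 2 * ε * ((m:ℝ) + i) with emdef
  have hem_inj : Function.Injective em := by
    intro i j hij
    rw [emdef] at hij
    simp only [add_right_injective] at hij
    have : (i:ℝ) = (j:ℝ) := by
      have h2 : 2 * ε * ((m:ℝ) + i) = 2 * ε * ((m:ℝ) + j) := by linarith [hij]
      have := mul_left_cancel₀ (ne_of_gt hε2) h2
      linarith
    exact_mod_cast this
  set Tfin : Finset ℕ := (Finset.range n).filter
    (fun i => em i ∈ Set.Ioo (a + ε) (b - ε)) with Tdef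
  set Tfin' : Finset ℕ := Tfin.filter (fun i => h (em i) < 1) with T'def
  have hT'T : Tfin' ⊆ Tfin := Finset.filter_subset _ _
  have hGset : {y : ℝ | (∃ α : ℤ, y = s + 2 * ε * α) ∧ y ∈ Set.Ioo (a + ε) (b - ε)}
      = ↑(Tfin.image em) := by
    ext y
    simp only [Set.mem_setOf_eq, Finset.coe_image, Set.mem_image, Finset.mem_coe,
      Tdef, Finset.mem_filter, Finset.mem_range]
    constructor
    · rintro ⟨⟨α, rfl⟩, hy⟩
      obtain ⟨hy1, hy2⟩ := hy
      have hαm : m - 1 < α := by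
        have hcast : 2 * ε * ((m:ℝ) - 1) < 2 * ε * (α:ℝ) := by nlinarith
        have := lt_of_mul_lt_mul_left hcast hε2.le
        exact_mod_cast (by push_cast; linarith : ((m - 1 : ℤ):ℝ) < (α:ℝ))
      have hαM : α < M + 1 := by
        have hcast : 2 * ε * (α:ℝ) < 2 * ε * ((M:ℝ) + 1) := by nlinarith
        have := lt_of_mul_lt_mul_left hcast hε2.le
        exact_mod_cast (by push_cast; linarith : ((α : ℤ):ℝ) < ((M + 1 : ℤ):ℝ))
      refine ⟨(α - m).toNat, ⟨?_, ?_⟩, ?_⟩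
      · rw [ndef]
        exact (Int.toNat_lt_toNat (by omega)).2 (by omega)
      · have : em ((α - m).toNat) = s + 2 * ε * (α:ℝ) := by
          rw [emdef]
          have : (((α - m).toNat : ℕ) : ℝ) = (α:ℝ) - (m:ℝ) := by
            exact_mod_cast Int.toNat_of_nonneg (by omega : (0:ℤ) ≤ α - m)
          simp only [this]
          ring
        rw [this]
        exact ⟨hy1, hy2⟩
      · rw [emdef]
        have : (((α - m).toNat : ℕ) : ℝ) = (α:ℝ) - (m:ℝ) := by
          exact_mod_cast Int.toNat_of_nonneg (by omega : (0:ℤ) ≤ α - m)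
        simp only [this]
        ring
    · rintro ⟨i, ⟨_, hi2⟩, rfl⟩
      refine ⟨⟨m + i, ?_⟩, hi2⟩
      rw [emdef]
      push_cast
      ring
  refine ⟨s, ↑(Tfin'.image em), ?_, ?_, ?_⟩
  · rw [hGset]
    exact Finset.coe_subset.2 (Finset.image_subset_image hT'T)
  · rw [hGset]
    exact (Tfin.image em).finite_toSet.subset Set.diff_subset
  -- the main estimate
  have hdiff : {y : ℝ | (∃ α : ℤ, y = s + 2 * ε * α) ∧ y ∈ Set.Ioo (a + ε) (b - ε)}
      \ ↑(Tfin'.image em) = ↑((Tfin \ Tfin').image em) := by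
    rw [hGset, ← Finset.coe_sdiff, Finset.image_sdiff _ _ hem_inj]
  rw [hdiff]
  have hmemIoo : ∀ i ∈ Tfin, em i ∈ Set.Ioo (a + ε) (b - ε) := by
    intro i hi
    rw [Tdef] at hi
    exact (Finset.mem_filter.1 hi).2
  -- disjointness of the intervals
  have hdisj : (↑Tfin' : Set ℕ).Pairwise
      (Function.onFun Disjoint fun i => Set.Ioo (em i - ε) (em i + ε)) := by
    intro i _ j _ hij
    have key : ∀ k l : ℕ, k < l →
        Disjoint (Set.Ioo (em k - ε) (em k + ε)) (Set.Ioo (em l - ε) (em l + ε)) := by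
      intro k l hkl
      rw [Set.Ioo_disjoint_Ioo]
      have hkl' : (k:ℝ) + 1 ≤ (l:ℝ) := by exact_mod_cast hkl
      have hmid : em k + ε ≤ em l - ε := by
        rw [emdef]; simp only; nlinarith
      calc min (em k + ε) (em l + ε) ≤ em k + ε := min_le_left _ _
      _ ≤ em l - ε := hmid
      _ ≤ max (em k - ε) (em l - ε) := le_max_right _ _
    rcases hij.lt_or_gt with hlt | hlt
    · exact key i j hlt
    · exact (key j i hlt).symm
  have hUnion : (⋃ x ∈ (↑(Tfin'.image em) : Set ℝ), Set.Ioo (x - ε) (x + ε))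
      = ⋃ i ∈ Tfin', Set.Ioo (em i - ε) (em i + ε) := by
    rw [Finset.coe_image, Set.biUnion_image]
    rfl
  have hcellsub : ∀ i ∈ Tfin, Set.Ioo (em i - ε) (em i + ε) ⊆ Set.Ioo a b := by
    intro i hi
    obtain ⟨h1, h2⟩ := hmemIoo i hi
    exact Set.Ioo_subset_Ioo (by linarith) (by linarith)
  have hIntUnion : ∫ t in ⋃ i ∈ Tfin', Set.Ioo (em i - ε) (em i + ε), |g t|
      = ∑ i ∈ Tfin', ∫ t in Set.Ioo (em i - ε) (em i + ε), |g t| :=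
    integral_biUnion_finset _ (fun i _ => measurableSet_Ioo) hdisj
      (fun i hi => IntegrableOn.mono_set hg.abs (hcellsub i (hT'T hi)))
  -- cell values
  have hcell' : ∀ i ∈ Tfin', (∫ t in Set.Ioo (em i - ε) (em i + ε), |g t|) = 2 * h (em i) := by
    intro i hi
    have hlt : h (em i) < 1 := (Finset.mem_filter.1 hi).2
    have havg := avgAbs_interior a b g ε hε (em i) (hmemIoo i (hT'T hi))
    have hmin : h (em i) = (∫ t in Set.Ioo (em i - ε) (em i + ε), |g t|) / 2 := by
      rw [hdef]
      simp only [havg]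
      apply min_eq_left
      by_contra hge
      push_neg at hge
      have : h (em i) = 1 := by
        rw [hdef]; simp only [havg]; exact min_eq_right hge.le
      linarith
    rw [hmin]; ring
  have hone : ∀ i ∈ Tfin \ Tfin', h (em i) = 1 := by
    intro i hi
    rw [Finset.mem_sdiff] at hi
    obtain ⟨hiT, hiT'⟩ := hi
    have : ¬ h (em i) < 1 := by
      intro hq
      exact hiT' (Finset.mem_filter.2 ⟨hiT, hq⟩)
    linarith [h_le_one (em i), this]
  rw [hUnion, hIntUnion, Set.ncard_coe_finset]
  have hsum1 : ∑ i ∈ Tfin', ∫ t in Set.Ioo (em i - ε) (em i + ε), |g t|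
      = ∑ i ∈ Tfin', 2 * h (em i) := Finset.sum_congr rfl hcell'
  have hcard : ((((Tfin \ Tfin').image em).card : ℕ) : ℝ)
      = ∑ i ∈ Tfin \ Tfin', h (em i) := by
    rw [Finset.card_image_of_injective _ hem_inj, Finset.sum_congr rfl hone]
    simp
  have hint_ab : IntegrableOn h (Set.Ioo a b) :=
    bdd_int _ h_meas h_bd _ (by rw [Real.volume_Ioo]; exact ENNReal.ofReal_ne_top)
  have hJle : J ≤ ∫ x in Set.Ioo a b, h x := by
    apply setIntegral_mono_set hint_ab
    · exact ae_of_all _ (fun x => h_nonneg x)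
    · exact HasSubset.Subset.eventuallyLE (Set.Ioo_subset_Ioo (by linarith) (by linarith))
  have hRHS : (1 / (c₀ * ε)) * ∫ x in Set.Ioo a b, fcut c₀ (ε * avgAbs a b ε g x)
      = (1 / ε) * ∫ x in Set.Ioo a b, h x := by
    have hfc : ∀ x : ℝ, fcut c₀ (ε * avgAbs a b ε g x) = c₀ * h x := fun x => by
      rw [fcut_eq_mul_min]
    simp_rw [hfc]
    rw [integral_const_mul]
    have hc₀' : c₀ ≠ 0 := ne_of_gt hc₀
    field_simp
  rw [hsum1, hcard, hRHS]
  have hchain : ∑ i ∈ Tfin', 2 * h (em i) + 2 * ∑ i ∈ Tfin \ Tfin', h (em i)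
      = 2 * ∑ i ∈ Tfin, h (em i) := by
    rw [← Finset.sum_sdiff hT'T (f := fun i => h (em i)), ← Finset.mul_sum]
    ring
  rw [hchain]
  have hstep1 : ∑ i ∈ Tfin, h (em i) ≤ F s := by
    have heq : ∀ i ∈ Tfin, h (em i) = H (em i) := fun i hi =>
      (Set.indicator_of_mem (hmemIoo i hi) h).symm
    rw [Finset.sum_congr rfl heq]
    simp only [Fdef, emdef]
    exact Finset.sum_le_sum_of_subset_of_nonneg (Finset.filter_subset _ _)
      (fun i _ _ => H_nonneg _)
  calc 2 * ∑ i ∈ Tfin, h (em i) ≤ 2 * F s := by linarith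
  _ ≤ 2 * (J / (2*ε)) := by linarith
  _ = (1/ε) * J := by field_simp
  _ ≤ (1/ε) * ∫ x in Set.Ioo a b, h x := by
    apply mul_le_mul_of_nonneg_left hJle
    positivity

end
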